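/- Dirichlet's integral: for real (or complex with positive real part) exponents b_1,...,b_n, the integral over the standard (n−1)-dimensional probability simplex of ∏_i p_i^{b_i − 1} with respect to the canonical (Lebesgue-type) measure equals ∏_i Γ(b_i) / Γ(1 + ∑_i b_i) times n! (equivalently, with respect to Lebesgue measure on the simplex coordinates, ∏_i Γ(b_i)/Γ(∑_i b_i)). -/

import Mathlib

open MeasureTheory Real Set
open scoped ENNReal

lemma beta_ii (a c : ℝ) (ha : 0 < a) (hc : 0 < c) :
    IntervalIntegrable (fun x : ℝ => x ^ (a - 1) * (1 - x) ^ (c - 1)) volume 0 1 := by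
  have h := Complex.betaIntegral_convergent (u := (a : ℂ)) (v := (c : ℂ)) (by simpa) (by simpa)
  have := h.norm
  refine this.congr_ae ?_
  refine (ae_restrict_iff' measurableSet_uIoc).mpr ?_
  filter_upwards with x hx
  rw [Set.uIoc_of_le (by norm_num : (0:ℝ) ≤ 1)] at hx
  have hx0 : 0 ≤ x := hx.1.le
  have hx1 : 0 ≤ 1 - x := by linarith [hx.2]
  rw [show ((a:ℂ) - 1) = ((a - 1 : ℝ) : ℂ) by push_cast; ring,
    show ((c:ℂ) - 1) = ((c - 1 : ℝ) : ℂ) by push_cast; ring,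
    ← Complex.ofReal_cpow hx0, show ((1:ℂ) - x) = ((1 - x : ℝ) : ℂ) by push_cast; ring,
    ← Complex.ofReal_cpow hx1, ← Complex.ofReal_mul, Complex.norm_real,
    Real.norm_of_nonneg (by positivity)]

lemma beta_eval (a c : ℝ) (ha : 0 < a) (hc : 0 < c) :
    ∫ x in (0:ℝ)..1, x ^ (a - 1) * (1 - x) ^ (c - 1) =
      Real.Gamma a * Real.Gamma c / Real.Gamma (a + c) := by
  have h := Complex.Gamma_mul_Gamma_eq_betaIntegral (s := (a : ℂ)) (t := (c : ℂ))
    (by simpa) (by simpa)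
  have hβ : Complex.betaIntegral a c =
      ((∫ x in (0:ℝ)..1, x ^ (a - 1) * (1 - x) ^ (c - 1) : ℝ) : ℂ) := by
    rw [Complex.betaIntegral, ← intervalIntegral.integral_ofReal]
    refine intervalIntegral.integral_congr fun x hx => ?_
    rw [Set.uIcc_of_le (by norm_num : (0:ℝ) ≤ 1)] at hx
    rw [show ((a:ℂ) - 1) = ((a - 1 : ℝ) : ℂ) by push_cast; ring,
      show ((c:ℂ) - 1) = ((c - 1 : ℝ) : ℂ) by push_cast; ring,
      ← Complex.ofReal_cpow hx.1, show ((1:ℂ) - x) = ((1 - x : ℝ) : ℂ) by push_cast; ring,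
      ← Complex.ofReal_cpow (by linarith [hx.2]), ← Complex.ofReal_mul]
  rw [hβ, ← Complex.ofReal_add, Complex.Gamma_ofReal, Complex.Gamma_ofReal,
    Complex.Gamma_ofReal, ← Complex.ofReal_mul, ← Complex.ofReal_mul] at h
  have := Complex.ofReal_injective h
  have hG : Real.Gamma (a + c) ≠ 0 := (Real.Gamma_pos_of_pos (by linarith)).ne'
  field_simp
  linarith [this]

lemma beta_lint (a c : ℝ) (ha : 0 < a) (hc : 0 < c) :
    ∫⁻ x in Ioo (0:ℝ) 1, ENNReal.ofReal (x ^ (a - 1) * (1 - x) ^ (c - 1)) =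
      ENNReal.ofReal (Real.Gamma a * Real.Gamma c / Real.Gamma (a + c)) := by
  have hint : IntegrableOn (fun x : ℝ => x ^ (a - 1) * (1 - x) ^ (c - 1)) (Ioo 0 1) :=
    ((beta_ii a c ha hc).1).mono_set Ioo_subset_Ioc_self
  rw [← ofReal_integral_eq_lintegral_ofReal hint ?nn]
  · rw [← integral_Ioc_eq_integral_Ioo, ← intervalIntegral.integral_of_le zero_le_one,
      beta_eval a c ha hc]
  case nn =>
    filter_upwards [ae_restrict_mem measurableSet_Ioo] with x hx
    have h1 : 0 ≤ x := hx.1.le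
    have h2 : 0 ≤ 1 - x := by linarith [hx.2]
    positivity

lemma measSet (n : ℕ) (c : ℝ) :
    MeasurableSet {z : Fin n → ℝ | (∀ j, 0 ≤ z j) ∧ ∑ j, z j ≤ c} := by
  have heq : {z : Fin n → ℝ | (∀ j, 0 ≤ z j) ∧ ∑ j, z j ≤ c} =
      (⋂ j, {z : Fin n → ℝ | 0 ≤ z j}) ∩ {z : Fin n → ℝ | ∑ j, z j ≤ c} := by
    ext z; simp [Set.mem_iInter]
  rw [heq]
  exact (MeasurableSet.iInter fun j =>
      measurableSet_le measurable_const (measurable_pi_apply j)).inter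
    (measurableSet_le (Finset.measurable_sum _ fun j _ => measurable_pi_apply j)
      measurable_const)

lemma meas_aux (n : ℕ) (e : Fin n → ℝ) (γ c : ℝ) :
    Measurable (fun z : Fin n → ℝ => if (∀ j, 0 ≤ z j) ∧ ∑ j, z j ≤ c then
      ENNReal.ofReal ((∏ j, z j ^ (e j - 1)) * (c - ∑ j, z j) ^ (γ - 1)) else 0) :=
  Measurable.ite (measSet n c) (by fun_prop) measurable_const

lemma scale (n : ℕ) (e : Fin n → ℝ) (γ : ℝ) {c : ℝ} (hc : 0 < c) :
    (∫⁻ z : Fin n → ℝ, if (∀ j, 0 ≤ z j) ∧ ∑ j, z j ≤ c then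
      ENNReal.ofReal ((∏ j, z j ^ (e j - 1)) * (c - ∑ j, z j) ^ (γ - 1)) else 0)
    = ENNReal.ofReal (c ^ (∑ j, e j + γ - 1)) *
      ∫⁻ z : Fin n → ℝ, if (∀ j, 0 ≤ z j) ∧ ∑ j, z j ≤ 1 then
      ENNReal.ofReal ((∏ j, z j ^ (e j - 1)) * (1 - ∑ j, z j) ^ (γ - 1)) else 0 := by
  set g : (Fin n → ℝ) → ℝ≥0∞ := fun z => if (∀ j, 0 ≤ z j) ∧ ∑ j, z j ≤ c then
      ENNReal.ofReal ((∏ j, z j ^ (e j - 1)) * (c - ∑ j, z j) ^ (γ - 1)) else 0 with hg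
  set g₁ : (Fin n → ℝ) → ℝ≥0∞ := fun z => if (∀ j, 0 ≤ z j) ∧ ∑ j, z j ≤ 1 then
      ENNReal.ofReal ((∏ j, z j ^ (e j - 1)) * (1 - ∑ j, z j) ^ (γ - 1)) else 0 with hg₁
  have hcn : (0:ℝ) < c ^ n := by positivity
  have hmap := Measure.map_addHaar_smul (volume : Measure (Fin n → ℝ)) hc.ne'
  have hlm := lintegral_map (μ := (volume : Measure (Fin n → ℝ))) (meas_aux n e γ c)
      (measurable_const_smul (M := ℝ) c)
  rw [hmap, lintegral_smul_measure] at hlm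
  have hpt : (fun w : Fin n → ℝ => g (c • w)) =
      fun w => ENNReal.ofReal (c ^ (∑ j, e j + γ - 1) * (c ^ n)⁻¹) * g₁ w := by
    funext w
    have hcond : ((∀ j, 0 ≤ (c • w) j) ∧ ∑ j, (c • w) j ≤ c) ↔
        ((∀ j, 0 ≤ w j) ∧ ∑ j, w j ≤ 1) := by
      simp only [Pi.smul_apply, smul_eq_mul, ← Finset.mul_sum]
      constructor
      · rintro ⟨h1, h2⟩
        exact ⟨fun j => nonneg_of_mul_nonneg_right (h1 j) hc, by nlinarith [h2]⟩
      · rintro ⟨h1, h2⟩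
        exact ⟨fun j => mul_nonneg hc.le (h1 j), by nlinarith⟩
    by_cases h : (∀ j, 0 ≤ w j) ∧ ∑ j, w j ≤ 1
    · simp only [hg, hg₁]
      rw [if_pos (hcond.mpr h), if_pos h]
      simp only [Pi.smul_apply, smul_eq_mul]
      rw [← ENNReal.ofReal_mul (by positivity)]
      congr 1
      have h1w : 0 ≤ 1 - ∑ j, w j := by linarith [h.2]
      have hprod : ∏ j, (c * w j) ^ (e j - 1) =
          c ^ (∑ j, (e j - 1)) * ∏ j, w j ^ (e j - 1) := by
        rw [Real.rpow_sum_of_pos hc, ← Finset.prod_mul_distrib]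
        exact Finset.prod_congr rfl fun j _ => Real.mul_rpow hc.le (h.1 j)
      have hsub : c - ∑ j, c * w j = c * (1 - ∑ j, w j) := by
        rw [← Finset.mul_sum]; ring
      rw [hprod, hsub, Real.mul_rpow hc.le h1w]
      have hexp : c ^ (∑ j, (e j - 1)) * c ^ (γ - 1) =
          c ^ (∑ j, e j + γ - 1) * (c ^ n)⁻¹ := by
        rw [← Real.rpow_add hc, ← Real.rpow_natCast c n, ← Real.rpow_neg hc.le,
          ← Real.rpow_add hc]
        congr 1
        rw [Finset.sum_sub_distrib]
        simp
        ring
      rw [← hexp]; ring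
    · simp only [hg, hg₁]
      rw [if_neg (fun hh => h (hcond.mp hh)), if_neg h, mul_zero]
  rw [hpt] at hlm
  rw [lintegral_const_mul _ (meas_aux n e γ 1)] at hlm
  have hfr : Module.finrank ℝ (Fin n → ℝ) = n := Module.finrank_fin_fun ℝ
  rw [hfr] at hlm
  have habs : |(c ^ n)⁻¹| = (c ^ n)⁻¹ := abs_of_pos (by positivity)
  rw [habs] at hlm
  calc ∫⁻ z, g z = ENNReal.ofReal (c ^ n) * (ENNReal.ofReal ((c ^ n)⁻¹) * ∫⁻ z, g z) := by
        rw [← mul_assoc, ← ENNReal.ofReal_mul hcn.le, mul_inv_cancel₀ hcn.ne',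
          ENNReal.ofReal_one, one_mul]
    _ = ENNReal.ofReal (c ^ n) *
        (ENNReal.ofReal (c ^ (∑ j, e j + γ - 1) * (c ^ n)⁻¹) * ∫⁻ z, g₁ z) := by
          rw [smul_eq_mul] at hlm; rw [hlm]
    _ = ENNReal.ofReal (c ^ (∑ j, e j + γ - 1)) * ∫⁻ z, g₁ z := by
        rw [← mul_assoc, ← ENNReal.ofReal_mul hcn.le]
        congr 2
        field_simp

lemma ind_eq (n : ℕ) (f : (Fin n → ℝ) → ℝ≥0∞) (c : ℝ) :
    (∫⁻ z : Fin n → ℝ, if (∀ j, 0 ≤ z j) ∧ ∑ j, z j ≤ c then f z else 0) =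
    ∫⁻ z in {z : Fin n → ℝ | (∀ j, 0 ≤ z j) ∧ ∑ j, z j ≤ c}, f z := by
  rw [← lintegral_indicator (measSet n c)]
  congr 1; funext z
  by_cases h : (∀ j, 0 ≤ z j) ∧ ∑ j, z j ≤ c <;>
    simp [Set.indicator_apply, Set.mem_setOf_eq, h]

lemma key : ∀ (n : ℕ) (b : Fin (n + 1) → ℝ), (∀ i, 0 < b i) →
    (∫⁻ y in {y : Fin n → ℝ | (∀ i, 0 ≤ y i) ∧ ∑ i, y i ≤ 1},
        ENNReal.ofReal ((∏ i : Fin n, y i ^ (b i.castSucc - 1)) *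
          (1 - ∑ i, y i) ^ (b (Fin.last n) - 1)))
      = ENNReal.ofReal ((∏ i, Real.Gamma (b i)) / Real.Gamma (∑ i, b i)) := by
  intro n
  induction n with
  | zero =>
    intro b hb
    have hset : {y : Fin 0 → ℝ | (∀ i, 0 ≤ y i) ∧ ∑ i, y i ≤ 1} = Set.univ := by
      ext y; simp
    rw [hset, Measure.restrict_univ]
    simp only [Finset.univ_eq_empty, Finset.prod_empty, Finset.sum_empty, sub_zero,
      Real.one_rpow, one_mul, lintegral_const]
    have hvol : (volume : Measure (Fin 0 → ℝ)) Set.univ = 1 := by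
      rw [show (volume : Measure (Fin 0 → ℝ)) = Measure.pi fun _ => volume from volume_pi,
        Measure.pi_univ]
      simp
    rw [hvol, mul_one]
    have h0 : ∑ i : Fin 1, b i = b 0 := by simp
    have h1 : ∏ i : Fin 1, Real.Gamma (b i) = Real.Gamma (b 0) := by simp
    rw [h0, h1, div_self (Real.Gamma_pos_of_pos (hb 0)).ne', ENNReal.ofReal_one]
  | succ n ih =>
    intro b hb
    set b' : Fin (n + 1) → ℝ :=
      Fin.snoc (fun j : Fin n => b j.castSucc.castSucc) (b (Fin.last (n + 1))) with hb'_def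
    have hb'cs : ∀ j : Fin n, b' j.castSucc = b j.castSucc.castSucc := by
      intro j; simp [hb'_def]
    have hb'last : b' (Fin.last n) = b (Fin.last (n + 1)) := by simp [hb'_def]
    have hb' : ∀ i, 0 < b' i := by
      intro i
      induction i using Fin.lastCases with
      | last => rw [hb'last]; exact hb _
      | cast j => rw [hb'cs]; exact hb _
    have hA : 0 < b ((Fin.last n).castSucc) := hb _
    set s : ℝ := ∑ i, b' i with hs_def
    have hs : 0 < s := Finset.sum_pos (fun i _ => hb' i) Finset.univ_nonempty
    have hssum : s = ∑ j : Fin n, b' j.castSucc + b' (Fin.last n) := Fin.sum_univ_castSucc b'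
    set C : ℝ≥0∞ := ENNReal.ofReal ((∏ i, Real.Gamma (b' i)) / Real.Gamma s) with hC_def
    set F : (Fin (n + 1) → ℝ) → ℝ≥0∞ := fun y =>
      if (∀ i, 0 ≤ y i) ∧ ∑ i, y i ≤ 1 then
        ENNReal.ofReal ((∏ i : Fin (n + 1), y i ^ (b i.castSucc - 1)) *
          (1 - ∑ i, y i) ^ (b (Fin.last (n + 1)) - 1))
      else 0 with hF_def
    have hFmeas : Measurable F := meas_aux (n + 1) (fun i => b i.castSucc) (b (Fin.last (n + 1))) 1
    set g : ℝ → (Fin n → ℝ) → ℝ≥0∞ := fun c z =>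
      if (∀ j, 0 ≤ z j) ∧ ∑ j, z j ≤ c then
        ENNReal.ofReal ((∏ j, z j ^ (b' j.castSucc - 1)) *
          (c - ∑ j, z j) ^ (b' (Fin.last n) - 1))
      else 0 with hg_def
    set e := MeasurableEquiv.piFinSuccAbove (fun _ : Fin (n + 1) => ℝ) (Fin.last n) with he_def
    have hmp := volume_preserving_piFinSuccAbove (fun _ : Fin (n + 1) => ℝ) (Fin.last n)
    have hpt : ∀ (t : ℝ) (z : Fin n → ℝ), F (e.symm (t, z)) =
        if 0 ≤ t then ENNReal.ofReal (t ^ (b ((Fin.last n).castSucc) - 1)) * g (1 - t) z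
        else 0 := by
      intro t z
      have hsymm : e.symm (t, z) = (Fin.snoc z t : Fin (n+1) → ℝ) := by
        rw [he_def, MeasurableEquiv.piFinSuccAbove_symm_apply]
        exact Fin.insertNth_last' t z
      rw [hsymm]
      have hc1 : (∀ i : Fin (n + 1), 0 ≤ (Fin.snoc z t : Fin (n+1) → ℝ) i) ↔ ((∀ j, 0 ≤ z j) ∧ 0 ≤ t) := by
        constructor
        · intro h
          exact ⟨fun j => by simpa using h j.castSucc, by simpa using h (Fin.last n)⟩
        · intro h i
          induction i using Fin.lastCases with
          | last => simpa using h.2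
          | cast j => simpa using h.1 j
      have hc2 : ∑ i : Fin (n + 1), (Fin.snoc z t : Fin (n+1) → ℝ) i = ∑ j, z j + t := by
        rw [Fin.sum_univ_castSucc]
        simp
      by_cases ht : 0 ≤ t
      · by_cases hz : (∀ j, 0 ≤ z j) ∧ ∑ j, z j ≤ 1 - t
        · have hcond : (∀ i, 0 ≤ (Fin.snoc z t : Fin (n+1) → ℝ) i) ∧ ∑ i : Fin (n+1), (Fin.snoc z t : Fin (n+1) → ℝ) i ≤ 1 := by
            rw [hc2]; exact ⟨hc1.mpr ⟨hz.1, ht⟩, by linarith [hz.2]⟩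
          rw [hF_def]
          simp only
          rw [if_pos hcond, hg_def]
          simp only
          rw [if_pos hz, if_pos ht, ← ENNReal.ofReal_mul (Real.rpow_nonneg ht _)]
          congr 1
          have hprod : ∏ i : Fin (n + 1), (Fin.snoc z t : Fin (n+1) → ℝ) i ^ (b i.castSucc - 1) =
              (∏ j : Fin n, z j ^ (b' j.castSucc - 1)) * t ^ (b ((Fin.last n).castSucc) - 1) := by
            rw [Fin.prod_univ_castSucc]
            congr 1
            · exact Finset.prod_congr rfl fun j _ => by rw [Fin.snoc_castSucc, hb'cs]
            · rw [Fin.snoc_last]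
          rw [hprod, hc2, hb'last,
            show (1 : ℝ) - (∑ j, z j + t) = (1 - t) - ∑ j, z j by ring]
          ring
        · have hcond : ¬((∀ i, 0 ≤ (Fin.snoc z t : Fin (n+1) → ℝ) i) ∧ ∑ i : Fin (n+1), (Fin.snoc z t : Fin (n+1) → ℝ) i ≤ 1) := by
            rw [hc2]; rintro ⟨h1, h2⟩; exact hz ⟨(hc1.mp h1).1, by linarith⟩
          rw [hF_def]; simp only
          rw [if_pos ht, if_neg hcond, hg_def]; simp only
          rw [if_neg hz, mul_zero]
      · have hcond : ¬((∀ i, 0 ≤ (Fin.snoc z t : Fin (n+1) → ℝ) i) ∧ ∑ i : Fin (n+1), (Fin.snoc z t : Fin (n+1) → ℝ) i ≤ 1) :=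
          fun h => ht (hc1.mp h.1).2
        rw [hF_def]
        simp only
        rw [if_neg hcond, if_neg ht]
    set Φ : ℝ → ℝ≥0∞ := fun t =>
      if 0 ≤ t then ENNReal.ofReal (t ^ (b ((Fin.last n).castSucc) - 1)) * ∫⁻ z, g (1 - t) z
      else 0 with hΦ_def
    have hΦ : ∀ t : ℝ,
        (∫⁻ z, if 0 ≤ t then ENNReal.ofReal (t ^ (b ((Fin.last n).castSucc) - 1)) * g (1 - t) z
          else 0) = Φ t := by
      intro t
      by_cases h : 0 ≤ t
      · simp only [hΦ_def, h, if_true]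
        exact lintegral_const_mul _ (meas_aux n (fun j => b' j.castSucc) (b' (Fin.last n)) (1 - t))
      · simp [hΦ_def, h]
    have hzero : ∀ t : ℝ, t ∉ Icc (0:ℝ) 1 → Φ t = 0 := by
      intro t ht
      rw [Set.mem_Icc, not_and_or] at ht
      rcases ht with h | h
      · exact if_neg h
      · push_neg at h
        rw [hΦ_def]
        simp only
        rw [if_pos (by linarith : (0:ℝ) ≤ t)]
        have hg0 : ∀ z : Fin n → ℝ, g (1 - t) z = 0 := by
          intro z
          rw [hg_def]
          simp only
          apply if_neg
          rintro ⟨h1, h2⟩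
          have := Finset.sum_nonneg (fun j (_ : j ∈ Finset.univ) => h1 j)
          linarith
        simp [hg0]
    have hval : ∀ t : ℝ, t ∈ Ioo (0:ℝ) 1 → Φ t =
        ENNReal.ofReal (t ^ (b ((Fin.last n).castSucc) - 1) * (1 - t) ^ (s - 1)) * C := by
      intro t ht
      have h1t : (0:ℝ) < 1 - t := by linarith [ht.2]
      rw [hΦ_def]
      simp only
      rw [if_pos ht.1.le]
      have hg1 : (∫⁻ z, g (1 - t) z) =
          ENNReal.ofReal ((1 - t) ^ (∑ j : Fin n, b' j.castSucc + b' (Fin.last n) - 1)) *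
            ∫⁻ z, g 1 z := scale n (fun j => b' j.castSucc) (b' (Fin.last n)) h1t
      have hg2 : (∫⁻ z, g 1 z) = C := by
        rw [hg_def]
        simp only
        rw [ind_eq n (fun z => ENNReal.ofReal ((∏ j, z j ^ (b' j.castSucc - 1)) *
          (1 - ∑ j, z j) ^ (b' (Fin.last n) - 1))) 1]
        exact ih b' hb'
      rw [hg1, ← hssum, hg2, ← mul_assoc,
        ← ENNReal.ofReal_mul (Real.rpow_nonneg ht.1.le _)]
    calc (∫⁻ y in {y : Fin (n+1) → ℝ | (∀ i, 0 ≤ y i) ∧ ∑ i, y i ≤ 1},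
          ENNReal.ofReal ((∏ i : Fin (n+1), y i ^ (b i.castSucc - 1)) *
            (1 - ∑ i, y i) ^ (b (Fin.last (n+1)) - 1)))
        = ∫⁻ y, F y := (ind_eq (n+1) (fun y =>
            ENNReal.ofReal ((∏ i : Fin (n+1), y i ^ (b i.castSucc - 1)) *
              (1 - ∑ i, y i) ^ (b (Fin.last (n+1)) - 1))) 1).symm
      _ = ∫⁻ p : ℝ × (Fin n → ℝ), F (e.symm p) := by
          rw [← (hmp.symm e).map_eq, lintegral_map hFmeas e.symm.measurable]
      _ = ∫⁻ t : ℝ, ∫⁻ z : Fin n → ℝ, F (e.symm (t, z)) := by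
          rw [Measure.volume_eq_prod]
          exact lintegral_prod (fun p => F (e.symm p))
            ((hFmeas.comp e.symm.measurable).aemeasurable)
      _ = ∫⁻ t : ℝ, Φ t := by
          refine lintegral_congr fun t => ?_
          rw [← hΦ t]
          exact lintegral_congr fun z => hpt t z
      _ = ∫⁻ t in Icc (0:ℝ) 1, Φ t := by
          rw [← lintegral_indicator measurableSet_Icc]
          refine lintegral_congr fun t => ?_
          by_cases h : t ∈ Icc (0:ℝ) 1
          · simp [Set.indicator_apply, h]
          · simp [Set.indicator_apply, h, hzero t h]
      _ = ∫⁻ t in Ioo (0:ℝ) 1, Φ t := by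
          rw [← Measure.restrict_congr_set Ioo_ae_eq_Icc]
      _ = ∫⁻ t in Ioo (0:ℝ) 1,
            ENNReal.ofReal (t ^ (b ((Fin.last n).castSucc) - 1) * (1 - t) ^ (s - 1)) * C :=
          setLIntegral_congr_fun measurableSet_Ioo hval
      _ = (∫⁻ t in Ioo (0:ℝ) 1,
            ENNReal.ofReal (t ^ (b ((Fin.last n).castSucc) - 1) * (1 - t) ^ (s - 1))) * C :=
          lintegral_mul_const _ (by fun_prop)
      _ = ENNReal.ofReal (Real.Gamma (b ((Fin.last n).castSucc)) * Real.Gamma s /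
            Real.Gamma (b ((Fin.last n).castSucc) + s)) * C := by
          rw [beta_lint _ _ hA hs]
      _ = ENNReal.ofReal ((∏ i, Real.Gamma (b i)) / Real.Gamma (∑ i, b i)) := by
          rw [hC_def, ← ENNReal.ofReal_mul (by positivity)]
          congr 1
          have hsum : ∑ i, b i = b ((Fin.last n).castSucc) + s := by
            rw [hs_def, Fin.sum_univ_castSucc (f := b),
              Fin.sum_univ_castSucc (f := fun i : Fin (n+1) => b i.castSucc),
              Fin.sum_univ_castSucc (f := b')]
            simp only [hb'cs, hb'last]
            ring
          have hprodΓ : ∏ i, Real.Gamma (b i) =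
              Real.Gamma (b ((Fin.last n).castSucc)) * ∏ i, Real.Gamma (b' i) := by
            rw [Fin.prod_univ_castSucc (f := fun i => Real.Gamma (b i)),
              Fin.prod_univ_castSucc (f := fun i : Fin (n+1) => Real.Gamma (b i.castSucc)),
              Fin.prod_univ_castSucc (f := fun i => Real.Gamma (b' i))]
            simp only [hb'cs, hb'last]
            ring
          rw [hsum, hprodΓ]
          have hGas : Real.Gamma s ≠ 0 := (Real.Gamma_pos_of_pos hs).ne'
          field_simp


/-- Dirichlet's integral: over the coordinates `(y₁,…,yₙ)` of the standard `n`-dimensional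
probability simplex on `n+1` outcomes (with `p_{n+1} = 1 - ∑ yᵢ`), with respect to Lebesgue
measure, `∫ ∏ pᵢ^{bᵢ-1} = ∏ Γ(bᵢ) / Γ(∑ bᵢ)`. -/
theorem dirichlet_integral (n : ℕ) (b : Fin (n + 1) → ℝ) (hb : ∀ i, 0 < b i) :
    (∫ y in {y : Fin n → ℝ | (∀ i, 0 ≤ y i) ∧ ∑ i, y i ≤ 1},
        (∏ i : Fin n, y i ^ (b i.castSucc - 1)) *
          (1 - ∑ i, y i) ^ (b (Fin.last n) - 1)) =
      (∏ i, Real.Gamma (b i)) / Real.Gamma (∑ i, b i) := by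
  have hS := measSet n 1
  have hnn : 0 ≤ᵐ[volume.restrict {y : Fin n → ℝ | (∀ i, 0 ≤ y i) ∧ ∑ i, y i ≤ 1}]
      fun y => (∏ i : Fin n, y i ^ (b i.castSucc - 1)) *
        (1 - ∑ i, y i) ^ (b (Fin.last n) - 1) := by
    filter_upwards [ae_restrict_mem hS] with y hy
    have h1 : 0 ≤ 1 - ∑ i, y i := by linarith [hy.2]
    exact mul_nonneg (Finset.prod_nonneg fun i _ => Real.rpow_nonneg (hy.1 i) _)
      (Real.rpow_nonneg h1 _)
  rw [integral_eq_lintegral_of_nonneg_ae hnn (by fun_prop : Measurable fun y : Fin n → ℝ =>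
      (∏ i : Fin n, y i ^ (b i.castSucc - 1)) *
        (1 - ∑ i, y i) ^ (b (Fin.last n) - 1)).aestronglyMeasurable]
  rw [key n b hb]
  refine ENNReal.toReal_ofReal ?_
  have hGa : ∀ i, 0 < Real.Gamma (b i) := fun i => Real.Gamma_pos_of_pos (hb i)
  have hGs : 0 < Real.Gamma (∑ i, b i) :=
    Real.Gamma_pos_of_pos (Finset.sum_pos (fun i _ => hb i) Finset.univ_nonempty)
  exact div_nonneg (Finset.prod_nonneg fun i _ => (hGa i).le) hGs.le
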